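/- Criterion for strict semidomain: a nonzero metabelian Lie algebra A is a strict semidomain (D(A) = A²) if and only if A is nonabelian and A² is linear-torsion free, i.e., for all nonzero x,y ∈ A with x ∈ A² and y ∉ A² one has x∘y ≠ 0. -/

import Mathlib

/-- The (two-sided Lie) ideal of `A` generated by the single element `x`. -/
def lieIdealGen (k : Type*) [CommRing k] {A : Type*} [LieRing A] [LieAlgebra k A] (x : A) :
    LieIdeal k A :=
  LieSubmodule.lieSpan k A {x}

/-- Nonzero `x` and `y` form a pair of zero divisors: `⟨x⟩ ∘ ⟨y⟩ = 0`. -/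
def IsZeroDivPair (k : Type*) [CommRing k] {A : Type*} [LieRing A] [LieAlgebra k A]
    (x y : A) : Prop :=
  x ≠ 0 ∧ y ≠ 0 ∧ ∀ a ∈ lieIdealGen k x, ∀ b ∈ lieIdealGen k y, ⁅a, b⁆ = 0

/-- `x` is a zero divisor. -/
def IsLieZeroDivisor (k : Type*) [CommRing k] {A : Type*} [LieRing A] [LieAlgebra k A]
    (x : A) : Prop :=
  ∃ y, IsZeroDivPair k x y

/-- `D(A)`: all zero divisors of `A` together with `0`. -/
def DSet (k : Type*) [CommRing k] (A : Type*) [LieRing A] [LieAlgebra k A] : Set A :=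
  {x | x = 0 ∨ IsLieZeroDivisor k x}

/-- The Fitting radical: elements whose generated ideal is a nilpotent Lie algebra. -/
def FitSet (k : Type*) [CommRing k] (A : Type*) [LieRing A] [LieAlgebra k A] : Set A :=
  {x | LieModule.IsNilpotent (lieIdealGen k x) (lieIdealGen k x)}

/-- The commutant (derived ideal) `A²`. -/
def commutant (k : Type*) [CommRing k] (A : Type*) [LieRing A] [LieAlgebra k A] : LieIdeal k A :=
  ⁅(⊤ : LieIdeal k A), (⊤ : LieIdeal k A)⁆

/-- A Lie ring is metabelian if `(a∘b)∘(c∘d) = 0` identically. -/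
def IsMetabelianLie (A : Type*) [LieRing A] : Prop :=
  ∀ a b c d : A, ⁅⁅a, b⁆, ⁅c, d⁆⁆ = 0

/-- The commutant `A²` is linear-torsion free: nonzero `x ∈ A²` times `y ∉ A²` is nonzero. -/
def LTFree (k : Type*) [CommRing k] (A : Type*) [LieRing A] [LieAlgebra k A] : Prop :=
  ∀ x ∈ commutant k A, x ≠ 0 → ∀ y ∉ commutant k A, ⁅x, y⁆ ≠ 0


section Aux

variable (k : Type*) [CommRing k] (A : Type*) [LieRing A] [LieAlgebra k A]

/-- Auxiliary: the submodule span of all brackets, as a Lie ideal. -/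
def bracketIdealAux : LieIdeal k A where
  toSubmodule := Submodule.span k {z : A | ∃ a b : A, ⁅a, b⁆ = z}
  lie_mem := by
    intro c z hz
    induction hz using Submodule.span_induction with
    | mem w hw =>
        exact Submodule.subset_span ⟨c, w, rfl⟩
    | zero => simp
    | add u v hu hv hcu hcv => rw [lie_add]; exact Submodule.add_mem _ hcu hcv
    | smul t u hu hcu => rw [lie_smul]; exact Submodule.smul_mem _ t hcu

lemma commutant_le_bracketIdealAux : commutant k A ≤ bracketIdealAux k A := by
  rw [commutant, LieSubmodule.lieIdeal_oper_eq_span]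
  rw [LieSubmodule.lieSpan_le]
  rintro z ⟨x, n, rfl⟩
  exact Submodule.subset_span ⟨(x : A), (n : A), rfl⟩

lemma comm_lie_eq_zero (hA : IsMetabelianLie A) {x y : A}
    (hx : x ∈ commutant k A) (hy : y ∈ commutant k A) : ⁅x, y⁆ = 0 := by
  have hx' : x ∈ Submodule.span k {z : A | ∃ a b : A, ⁅a, b⁆ = z} :=
    commutant_le_bracketIdealAux k A hx
  have hy' : y ∈ Submodule.span k {z : A | ∃ a b : A, ⁅a, b⁆ = z} :=
    commutant_le_bracketIdealAux k A hy
  clear hx hy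
  induction hx' using Submodule.span_induction with
  | mem w hw =>
      obtain ⟨a, b, rfl⟩ := hw
      induction hy' using Submodule.span_induction with
      | mem v hv => obtain ⟨c, d, rfl⟩ := hv; exact hA a b c d
      | zero => simp
      | add u v _ _ h1 h2 => rw [lie_add, h1, h2, add_zero]
      | smul t u _ h1 => rw [lie_smul, h1, smul_zero]
  | zero => simp
  | add u v _ _ h1 h2 => rw [add_lie, h1, h2, add_zero]
  | smul t u _ h1 => rw [smul_lie, h1, smul_zero]

variable {k A}

lemma mem_lieIdealGen (x : A) : x ∈ lieIdealGen k x :=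
  LieSubmodule.subset_lieSpan rfl

lemma lieIdealGen_le {x : A} {I : LieIdeal k A} (h : x ∈ I) : lieIdealGen k x ≤ I :=
  LieSubmodule.lieSpan_le.mpr (Set.singleton_subset_iff.mpr h)

lemma lie_mem_commutant (a b : A) : ⁅a, b⁆ ∈ commutant k A :=
  LieSubmodule.lie_mem_lie (LieSubmodule.mem_top a) (LieSubmodule.mem_top b)

end Aux

/-- a nonzero metabelian Lie algebra is a strict semidomain iff it is
nonabelian and its commutant is linear-torsion free. -/
theorem strictSemidomain_iff (k : Type*) [Field k] (A : Type*) [LieRing A] [LieAlgebra k A]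
    [Nontrivial A] (hA : IsMetabelianLie A) :
    DSet k A = (commutant k A : Set A) ↔
      (¬ ∀ x y : A, ⁅x, y⁆ = 0) ∧ LTFree k A := by
  constructor
  · intro hD
    constructor
    · -- nonabelian
      intro hab
      -- commutant = ⊥
      have hzero : ∀ z ∈ Submodule.span k {z : A | ∃ a b : A, ⁅a, b⁆ = z}, z = 0 := by
        intro z hz
        induction hz using Submodule.span_induction with
        | mem w hw => obtain ⟨a, b, rfl⟩ := hw; exact hab a b
        | zero => rfl
        | add u v _ _ h1 h2 => rw [h1, h2, add_zero]
        | smul t u _ h1 => rw [h1, smul_zero]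
      have hcomm : ∀ z ∈ commutant k A, z = 0 := fun z hz =>
        hzero z (commutant_le_bracketIdealAux k A hz)
      obtain ⟨x, hx⟩ := exists_ne (0 : A)
      have hxD : x ∈ DSet k A := by
        right
        exact ⟨x, hx, hx, fun a _ b _ => hab a b⟩
      rw [hD] at hxD
      exact hx (hcomm x hxD)
    · -- LTFree
      intro x hx hx0 y hy hxy
      -- build the ideal S = {a ∈ A² | ⁅a, y⁆ = 0}
      apply hy
      let S : LieIdeal k A :=
        { carrier := {a : A | a ∈ commutant k A ∧ ⁅a, y⁆ = 0}
          add_mem' := by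
            rintro u v ⟨hu1, hu2⟩ ⟨hv1, hv2⟩
            exact ⟨add_mem hu1 hv1, by rw [add_lie, hu2, hv2, add_zero]⟩
          zero_mem' := ⟨zero_mem _, zero_lie y⟩
          smul_mem' := by
            rintro t u ⟨hu1, hu2⟩
            exact ⟨Submodule.smul_mem _ t hu1, by rw [smul_lie, hu2, smul_zero]⟩
          lie_mem := by
            rintro c a ⟨ha1, ha2⟩
            refine ⟨(commutant k A).lie_mem ha1, ?_⟩
            rw [lie_lie, ha2, lie_zero, zero_sub, neg_eq_zero]
            exact comm_lie_eq_zero k A hA ha1 (lie_mem_commutant c y) }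
      let T : LieIdeal k A :=
        { carrier := {b : A | ∀ a ∈ S, ⁅a, b⁆ = 0}
          add_mem' := by
            intro u v hu hv a ha
            rw [lie_add, hu a ha, hv a ha, add_zero]
          zero_mem' := fun a _ => lie_zero a
          smul_mem' := by
            intro t u hu a ha
            rw [lie_smul, hu a ha, smul_zero]
          lie_mem := by
            intro c b hb a ha
            have hac : ⁅a, c⁆ ∈ S := by
              have : (-⁅c, a⁆) ∈ S := neg_mem (S.lie_mem ha)
              rwa [lie_skew] at this
            rw [leibniz_lie, hb a ha, lie_zero, add_zero]
            exact hb ⁅a, c⁆ hac }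
      have hxS : x ∈ S := ⟨hx, hxy⟩
      have hyT : y ∈ T := fun a ha => ha.2
      have hpair : IsZeroDivPair k y x := by
        refine ⟨fun h => hy (h ▸ zero_mem _), hx0, ?_⟩
        intro a ha b hb
        have hbS : b ∈ S := lieIdealGen_le hxS hb
        have haT : a ∈ T := lieIdealGen_le hyT ha
        rw [← lie_skew, haT b hbS, neg_zero]
      have : y ∈ DSet k A := Or.inr ⟨x, hpair⟩
      rwa [hD] at this
  · rintro ⟨hnab, hltf⟩
    ext x
    constructor
    · rintro (rfl | ⟨y, hx0, hy0, hbr⟩)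
      · exact zero_mem _
      by_contra hxC
      by_cases hyC : y ∈ commutant k A
      · refine hltf y hyC hy0 x hxC ?_
        rw [← lie_skew, hbr x (mem_lieIdealGen x) y (mem_lieIdealGen y), neg_zero]
      · by_cases hcen : ∃ u : A, ⁅u, x⁆ ≠ 0
        · obtain ⟨u, hu⟩ := hcen
          refine hltf ⁅u, x⁆ (lie_mem_commutant u x) hu y hyC ?_
          exact hbr ⁅u, x⁆ ((lieIdealGen k x).lie_mem (mem_lieIdealGen x)) y
            (mem_lieIdealGen y)
        · push_neg at hcen
          apply hnab
          intro u v
          by_contra huv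
          exact hltf ⁅u, v⁆ (lie_mem_commutant u v) huv x hxC (hcen ⁅u, v⁆)
    · intro hxC
      by_cases hx0 : x = 0
      · exact Or.inl hx0
      refine Or.inr ⟨x, hx0, hx0, ?_⟩
      intro a ha b hb
      exact comm_lie_eq_zero k A hA (lieIdealGen_le hxC ha) (lieIdealGen_le hxC hb)
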